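/- Suppose D : ℝ^{q×q} → ℝ^{q×q} is a linear operator with Hilbert–Schmidt norm ‖D‖ ≤ 1/10, and let I denote the identity operator. Then I + D = (I + P_{W⊥}(D) + M) ∘ 𝒲, where W = span{I ⊗ W₁ + W₂ ⊗ I : W₁, W₂ ∈ ℝ^{q×q}}, M is a linear operator with ‖M‖ ≤ 5‖D‖²/√q, and 𝒲 is a rank-preserving linear map of the form (I+E_R) ⊗ (I+E_L) satisfying ‖𝒲 − I‖₂ ≤ 3‖D‖/√q. -/

import Mathlib

open Matrix Finset

/-- The Hilbert–Schmidt inner product of two operators on `ℝ^{q×q}`, computed in the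
orthonormal basis of standard basis matrices (with the trace inner product on matrices). -/
noncomputable def hsInner (q : ℕ)
    (F G : Matrix (Fin q) (Fin q) ℝ → Matrix (Fin q) (Fin q) ℝ) : ℝ :=
  ∑ a : Fin q, ∑ b : Fin q,
    Matrix.trace ((F (Matrix.single a b 1))ᵀ * G (Matrix.single a b 1))

/-- The Hilbert–Schmidt (Euclidean) norm of an operator on `ℝ^{q×q}`. -/
noncomputable def hsNorm (q : ℕ)
    (F : Matrix (Fin q) (Fin q) ℝ → Matrix (Fin q) (Fin q) ℝ) : ℝ :=
  Real.sqrt (hsInner q F F)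

namespace LRPMaux

attribute [local instance] Matrix.frobeniusNormedAddCommGroup Matrix.frobeniusNormedRing
  Matrix.frobeniusNormedSpace

variable {q : ℕ}

/-- Sum of squares of entries. -/
noncomputable def fsq (A : Matrix (Fin q) (Fin q) ℝ) : ℝ := ∑ i, ∑ j, (A i j)^2

lemma fsq_nonneg (A : Matrix (Fin q) (Fin q) ℝ) : 0 ≤ fsq A := by
  unfold fsq; positivity

lemma trace_transpose_mul (A B : Matrix (Fin q) (Fin q) ℝ) :
    Matrix.trace (Aᵀ * B) = ∑ i, ∑ j, A i j * B i j := by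
  simp [Matrix.trace, Matrix.diag, Matrix.mul_apply]
  exact Finset.sum_comm

lemma norm_eq_sqrt_fsq (A : Matrix (Fin q) (Fin q) ℝ) : ‖A‖ = Real.sqrt (fsq A) := by
  rw [Matrix.frobenius_norm_def, Real.sqrt_eq_rpow]
  congr 1
  simp [fsq, Real.norm_eq_abs, Real.rpow_natCast]

lemma sqrt_trace_eq_norm (A : Matrix (Fin q) (Fin q) ℝ) :
    Real.sqrt (Matrix.trace (Aᵀ * A)) = ‖A‖ := by
  rw [norm_eq_sqrt_fsq, trace_transpose_mul]
  congr 1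
  simp [fsq, sq]

lemma fsq_eq_sq_norm (A : Matrix (Fin q) (Fin q) ℝ) : fsq A = ‖A‖^2 := by
  rw [norm_eq_sqrt_fsq, Real.sq_sqrt (fsq_nonneg A)]

lemma hsInner_eq (F G : Matrix (Fin q) (Fin q) ℝ → Matrix (Fin q) (Fin q) ℝ) :
    hsInner q F G = ∑ a : Fin q, ∑ b : Fin q, ∑ c : Fin q, ∑ d : Fin q,
      F (Matrix.single a b 1) c d * G (Matrix.single a b 1) c d := by
  unfold hsInner
  congr 1; ext a; congr 1; ext b
  exact trace_transpose_mul _ _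

lemma hsInner_self_eq (F : Matrix (Fin q) (Fin q) ℝ → Matrix (Fin q) (Fin q) ℝ) :
    hsInner q F F = ∑ a : Fin q, ∑ b : Fin q, ∑ c : Fin q, ∑ d : Fin q,
      (F (Matrix.single a b 1) c d)^2 := by
  rw [hsInner_eq]
  congr 1; ext a; congr 1; ext b; congr 1; ext c; congr 1; ext d
  ring

lemma hsInner_self_nonneg (F : Matrix (Fin q) (Fin q) ℝ → Matrix (Fin q) (Fin q) ℝ) :
    0 ≤ hsInner q F F := by
  rw [hsInner_self_eq]; positivity

lemma hsNorm_nonneg (F : Matrix (Fin q) (Fin q) ℝ → Matrix (Fin q) (Fin q) ℝ) :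
    0 ≤ hsNorm q F := Real.sqrt_nonneg _

lemma sq_hsNorm (F : Matrix (Fin q) (Fin q) ℝ → Matrix (Fin q) (Fin q) ℝ) :
    hsNorm q F ^ 2 = hsInner q F F := Real.sq_sqrt (hsInner_self_nonneg F)

lemma hsInner_comm (F G : Matrix (Fin q) (Fin q) ℝ → Matrix (Fin q) (Fin q) ℝ) :
    hsInner q F G = hsInner q G F := by
  simp only [hsInner_eq]
  congr 1; ext a; congr 1; ext b; congr 1; ext c; congr 1; ext d
  ring

lemma hsInner_add_left (F G H : Matrix (Fin q) (Fin q) ℝ → Matrix (Fin q) (Fin q) ℝ) :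
    hsInner q (fun X => F X + G X) H = hsInner q F H + hsInner q G H := by
  simp only [hsInner_eq, Matrix.add_apply, add_mul, Finset.sum_add_distrib]

lemma hsInner_add_right (F G H : Matrix (Fin q) (Fin q) ℝ → Matrix (Fin q) (Fin q) ℝ) :
    hsInner q F (fun X => G X + H X) = hsInner q F G + hsInner q F H := by
  rw [hsInner_comm, hsInner_add_left, hsInner_comm G F, hsInner_comm H F]

lemma sqrt_sum_sub_le {ι : Type*} [Fintype ι] (f g : ι → ℝ) :
    Real.sqrt (∑ i, (f i - g i)^2) ≤
      Real.sqrt (∑ i, f i ^2) + Real.sqrt (∑ i, g i ^2) := by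
  have h := norm_sub_le ((WithLp.equiv 2 (ι → ℝ)).symm f) ((WithLp.equiv 2 (ι → ℝ)).symm g)
  simp only [EuclideanSpace.norm_eq, Real.norm_eq_abs, sq_abs, PiLp.toLp_apply] at h
  simpa [PiLp.sub_apply, PiLp.toLp_apply, sq_abs] using h

lemma hsInner_self_prod (F : Matrix (Fin q) (Fin q) ℝ → Matrix (Fin q) (Fin q) ℝ) :
    hsInner q F F = ∑ p : (Fin q × Fin q) × Fin q × Fin q,
      (F (Matrix.single p.1.1 p.1.2 1) p.2.1 p.2.2)^2 := by
  rw [hsInner_self_eq]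
  simp only [Fintype.sum_prod_type]

lemma hsNorm_sub_le (F G : Matrix (Fin q) (Fin q) ℝ → Matrix (Fin q) (Fin q) ℝ) :
    hsNorm q (fun X => F X - G X) ≤ hsNorm q F + hsNorm q G := by
  unfold hsNorm
  rw [hsInner_self_prod, hsInner_self_prod, hsInner_self_prod]
  have h := sqrt_sum_sub_le
    (fun p : (Fin q × Fin q) × Fin q × Fin q => F (Matrix.single p.1.1 p.1.2 1) p.2.1 p.2.2)
    (fun p : (Fin q × Fin q) × Fin q × Fin q => G (Matrix.single p.1.1 p.1.2 1) p.2.1 p.2.2)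
  simpa [Matrix.sub_apply] using h


lemma mul_std_entry (A : Matrix (Fin q) (Fin q) ℝ) (a b c d : Fin q) :
    (A * Matrix.single a b (1:ℝ)) c d = if b = d then A c a else 0 := by
  simp [Matrix.mul_apply, Matrix.single, ite_and]

lemma std_mul_entry (B : Matrix (Fin q) (Fin q) ℝ) (a b c d : Fin q) :
    (Matrix.single a b (1:ℝ) * Bᵀ) c d = if a = c then B d b else 0 := by
  simp [Matrix.mul_apply, Matrix.single, ite_and, eq_comm]

lemma mul_std_mul_entry (A B : Matrix (Fin q) (Fin q) ℝ) (a b c d : Fin q) :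
    (A * Matrix.single a b (1:ℝ) * Bᵀ) c d = A c a * B d b := by
  simp [Matrix.mul_apply, Matrix.single, ite_and, Finset.sum_mul]

set_option linter.unnecessarySeqFocus false in
/-- HS inner product of the map `X ↦ A X + X Bᵀ` with itself. -/
lemma hsInner_pair_self (A B : Matrix (Fin q) (Fin q) ℝ) :
    hsInner q (fun X => A * X + X * Bᵀ) (fun X => A * X + X * Bᵀ)
      = q * fsq A + q * fsq B + 2 * Matrix.trace A * Matrix.trace B := by
  rw [hsInner_self_eq]
  simp only [Matrix.add_apply, mul_std_entry, std_mul_entry]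
  have expand : ∀ a b c d : Fin q,
      ((if b = d then A c a else 0) + (if a = c then B d b else 0))^2
      = (if b = d then (A c a)^2 else 0) + (if a = c then (B d b)^2 else 0)
        + (if b = d then (if a = c then 2 * A c a * B d b else 0) else 0) := by
    intro a b c d
    by_cases hbd : b = d <;> by_cases hac : a = c <;> simp [hbd, hac] <;> ring
  simp only [expand]
  simp only [Finset.sum_add_distrib, Finset.sum_ite_eq, Finset.mem_univ, if_true]
  simp [fsq, Matrix.trace, Matrix.diag, Finset.mul_sum, Finset.sum_mul]
  congr 1
  · congr 1 <;> exact Finset.sum_comm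
  · exact Finset.sum_comm

/-- HS inner product of the map `X ↦ A X Bᵀ` with itself. -/
lemma hsInner_tensor_self (A B : Matrix (Fin q) (Fin q) ℝ) :
    hsInner q (fun X => A * X * Bᵀ) (fun X => A * X * Bᵀ) = fsq A * fsq B := by
  rw [hsInner_self_eq]
  simp only [mul_std_mul_entry]
  simp only [mul_pow, ← Finset.sum_mul, ← Finset.mul_sum, fsq]
  rw [Finset.sum_comm (f := fun a c => (A c a)^2)]
  ring_nf
  congr 1
  exact Finset.sum_comm

lemma hsNorm_tensor (A B : Matrix (Fin q) (Fin q) ℝ) :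
    hsNorm q (fun X => A * X * Bᵀ) = ‖A‖ * ‖B‖ := by
  unfold hsNorm
  rw [hsInner_tensor_self, Real.sqrt_mul (fsq_nonneg A), norm_eq_sqrt_fsq, norm_eq_sqrt_fsq]

lemma apply_entry (P : Matrix (Fin q) (Fin q) ℝ →ₗ[ℝ] Matrix (Fin q) (Fin q) ℝ)
    (Z : Matrix (Fin q) (Fin q) ℝ) (c d : Fin q) :
    (P Z) c d = ∑ i, ∑ j, Z i j * (P (Matrix.single i j 1)) c d := by
  conv_lhs => rw [Matrix.matrix_eq_sum_single Z]
  rw [map_sum]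
  simp only [map_sum, Matrix.sum_apply]
  congr 1; ext i; congr 1; ext j
  have h : Matrix.single i j (Z i j) = (Z i j) • Matrix.single i j (1:ℝ) := by
    rw [Matrix.smul_single]; simp
  rw [h, _root_.map_smul]
  simp

lemma sum_mul_entries_tensor (L R G : Matrix (Fin q) (Fin q) ℝ) (a b : Fin q) :
    ∑ i : Fin q, ∑ j : Fin q, (L i a * R j b) * G i j = (Lᵀ * G * R) a b := by
  rw [Finset.sum_comm]
  simp only [Matrix.mul_apply, Matrix.transpose_apply, Finset.sum_mul]
  congr 1; ext j
  congr 1; ext i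
  ring

lemma sum_mul_entries_std (G : Matrix (Fin q) (Fin q) ℝ) (a b : Fin q) :
    ∑ i : Fin q, ∑ j : Fin q, (Matrix.single a b (1:ℝ)) i j * G i j = G a b := by
  simp [Matrix.single, ite_and]

lemma sum4_swap (f : Fin q → Fin q → Fin q → Fin q → ℝ) :
    ∑ a : Fin q, ∑ b : Fin q, ∑ c : Fin q, ∑ d : Fin q, f a b c d
      = ∑ c : Fin q, ∑ d : Fin q, ∑ a : Fin q, ∑ b : Fin q, f a b c d := by
  have h1 : ∀ a, ∑ b : Fin q, ∑ c : Fin q, ∑ d : Fin q, f a b c d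
      = ∑ c : Fin q, ∑ d : Fin q, ∑ b : Fin q, f a b c d := by
    intro a
    rw [Finset.sum_comm]
    congr 1; ext c
    rw [Finset.sum_comm]
  simp only [h1]
  rw [Finset.sum_comm]
  congr 1; ext c
  rw [Finset.sum_comm]


lemma hsInner_comp_self (P : Matrix (Fin q) (Fin q) ℝ →ₗ[ℝ] Matrix (Fin q) (Fin q) ℝ)
    (L R : Matrix (Fin q) (Fin q) ℝ) :
    hsInner q (fun Y => P (L * Y * Rᵀ - Y)) (fun Y => P (L * Y * Rᵀ - Y))
      = ∑ c : Fin q, ∑ d : Fin q,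
          fsq (Lᵀ * (Matrix.of fun i j => P (Matrix.single i j 1) c d) * R
               - (Matrix.of fun i j => P (Matrix.single i j 1) c d)) := by
  rw [hsInner_self_eq]
  have hent : ∀ a b c d : Fin q,
      P (L * Matrix.single a b 1 * Rᵀ - Matrix.single a b 1) c d
        = (Lᵀ * (Matrix.of fun i j => P (Matrix.single i j 1) c d) * R) a b
          - (Matrix.of fun i j => P (Matrix.single i j 1) c d) a b := by
    intro a b c d
    rw [apply_entry]
    have he : ∀ i j : Fin q,
        ((L * Matrix.single a b 1 * Rᵀ - Matrix.single a b 1 :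
            Matrix (Fin q) (Fin q) ℝ)) i j
          = L i a * R j b - (Matrix.single a b (1:ℝ)) i j := by
      intro i j; simp [Matrix.sub_apply, mul_std_mul_entry]
    simp only [he, sub_mul]
    simp only [Finset.sum_sub_distrib]
    rw [← sum_mul_entries_tensor L R (Matrix.of fun i j => P (Matrix.single i j 1) c d) a b,
      ← sum_mul_entries_std (Matrix.of fun i j => P (Matrix.single i j 1) c d) a b]
    simp [Matrix.of_apply]
  simp only [hent]
  rw [sum4_swap]
  simp [fsq, Matrix.sub_apply]

lemma sum_fsq_G (P : Matrix (Fin q) (Fin q) ℝ →ₗ[ℝ] Matrix (Fin q) (Fin q) ℝ) :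
    ∑ c : Fin q, ∑ d : Fin q,
        fsq (Matrix.of fun i j => P (Matrix.single i j 1) c d)
      = hsInner q (⇑P) (⇑P) := by
  rw [hsInner_self_eq,
    sum4_swap (f := fun i j c d => (P (Matrix.single i j 1) c d)^2)]
  simp [fsq]

end LRPMaux

attribute [local instance] Matrix.frobeniusNormedAddCommGroup Matrix.frobeniusNormedRing
  Matrix.frobeniusNormedSpace

open LRPMaux in
set_option maxHeartbeats 2000000 in
theorem linearize_rank_preserver_manifold (q : ℕ) (hq : 0 < q)
    (D Pperp : Matrix (Fin q) (Fin q) ℝ →ₗ[ℝ] Matrix (Fin q) (Fin q) ℝ)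
    (hD : hsNorm q (⇑D) ≤ 1 / 10)
    (hPmem : ∃ W₁ W₂ : Matrix (Fin q) (Fin q) ℝ, ∀ X, D X - Pperp X = W₁ * X + X * W₂ᵀ)
    (hPorth : ∀ W₁ W₂ : Matrix (Fin q) (Fin q) ℝ,
      hsInner q (⇑Pperp) (fun X => W₁ * X + X * W₂ᵀ) = 0) :
    ∃ (M : Matrix (Fin q) (Fin q) ℝ →ₗ[ℝ] Matrix (Fin q) (Fin q) ℝ)
      (EL ER : Matrix (Fin q) (Fin q) ℝ),
      hsNorm q (⇑M) ≤ 5 * (hsNorm q (⇑D)) ^ 2 / Real.sqrt q ∧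
      (∀ X : Matrix (Fin q) (Fin q) ℝ,
        Real.sqrt (Matrix.trace (((1 + EL) * X * (1 + ER)ᵀ - X)ᵀ *
            ((1 + EL) * X * (1 + ER)ᵀ - X))) ≤
          (3 * hsNorm q (⇑D) / Real.sqrt q) * Real.sqrt (Matrix.trace (Xᵀ * X))) ∧
      (∀ X : Matrix (Fin q) (Fin q) ℝ,
        X + D X = (1 + EL) * X * (1 + ER)ᵀ + Pperp ((1 + EL) * X * (1 + ER)ᵀ) +
          M ((1 + EL) * X * (1 + ER)ᵀ)) := by
  classical
  obtain ⟨W₁, W₂, hW⟩ := hPmem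
  set d : ℝ := hsNorm q (⇑D) with hd
  have hd0 : 0 ≤ d := Real.sqrt_nonneg _
  have hq1 : (1:ℝ) ≤ (q:ℝ) := by exact_mod_cast hq
  have hsq1 : (1:ℝ) ≤ Real.sqrt q := by
    rw [show (1:ℝ) = Real.sqrt 1 by simp]
    exact Real.sqrt_le_sqrt hq1
  have hsqpos : (0:ℝ) < Real.sqrt q := lt_of_lt_of_le one_pos hsq1
  set ε : ℝ := d / Real.sqrt q with hεdef
  have hε0 : 0 ≤ ε := div_nonneg hd0 hsqpos.le
  have hεd : ε ≤ d := div_le_self hd0 hsq1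
  have hε10 : ε ≤ 1/10 := le_trans hεd hD
  -- the matrices E_L, E_R
  set c0 : ℝ := Matrix.trace W₂ / q with hc0
  set EL : Matrix (Fin q) (Fin q) ℝ := W₁ + c0 • (1 : Matrix (Fin q) (Fin q) ℝ) with hEL
  set ER : Matrix (Fin q) (Fin q) ℝ := W₂ - c0 • (1 : Matrix (Fin q) (Fin q) ℝ) with hER
  have hERtr : Matrix.trace ER = 0 := by
    rw [hER]
    simp only [Matrix.trace_sub, Matrix.trace_smul, Matrix.trace_one, hc0, Fintype.card_fin, smul_eq_mul]
    have hqne : (q:ℝ) ≠ 0 := by positivity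
    field_simp
    ring
  have hpair : ∀ X, EL * X + X * ERᵀ = W₁ * X + X * W₂ᵀ := by
    intro X
    rw [hEL, hER]
    simp only [Matrix.transpose_sub, Matrix.transpose_smul, Matrix.transpose_one,
      add_mul, Matrix.mul_sub, Matrix.smul_mul, Matrix.mul_smul, Matrix.one_mul,
      Matrix.mul_one]
    abel
  have hPW : ∀ X, D X = Pperp X + (EL * X + X * ERᵀ) := by
    intro X
    rw [hpair X, ← hW X]
    abel
  set PW : Matrix (Fin q) (Fin q) ℝ → Matrix (Fin q) (Fin q) ℝ :=
    fun X => EL * X + X * ERᵀ with hPWdef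
  have horth : hsInner q (⇑Pperp) PW = 0 := by rw [hPWdef]; exact hPorth EL ER
  have hDfun : ⇑D = fun X => Pperp X + PW X := funext hPW
  have hDD : hsInner q (⇑D) (⇑D)
      = hsInner q (⇑Pperp) (⇑Pperp) + hsInner q PW PW := by
    have e1 := hsInner_add_left (q := q) (⇑Pperp) PW (fun X => Pperp X + PW X)
    have e2 := hsInner_add_right (q := q) (⇑Pperp) (⇑Pperp) PW
    have e3 := hsInner_add_right (q := q) PW (⇑Pperp) PW
    have e4 := hsInner_comm (q := q) PW (⇑Pperp)
    rw [hDfun, e1, e2, e3, horth, e4, horth]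
    ring
  have hdsq : hsInner q (⇑D) (⇑D) = d^2 := (sq_hsNorm _).symm
  have hPP : hsInner q (⇑Pperp) (⇑Pperp) ≤ d^2 := by
    have h := hsInner_self_nonneg (q := q) PW
    linarith
  have hPWPW : hsInner q PW PW ≤ d^2 := by
    have h := hsInner_self_nonneg (q := q) (⇑Pperp)
    linarith
  have hPWval : hsInner q PW PW = q * fsq EL + q * fsq ER := by
    rw [hPWdef, hsInner_pair_self, hERtr]
    ring
  have hqpos : (0:ℝ) < q := by positivity
  rw [hPWval] at hPWPW
  have hfsqEL : fsq EL ≤ d^2 / q := by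
    have h := fsq_nonneg ER
    rw [le_div_iff₀ hqpos]
    nlinarith
  have hfsqER : fsq ER ≤ d^2 / q := by
    have h := fsq_nonneg EL
    rw [le_div_iff₀ hqpos]
    nlinarith
  have hsqdq : Real.sqrt (d^2 / q) = ε := by
    rw [Real.sqrt_div (sq_nonneg d), Real.sqrt_sq hd0, hεdef]
  have hELn : ‖EL‖ ≤ ε := by
    rw [norm_eq_sqrt_fsq, ← hsqdq]
    exact Real.sqrt_le_sqrt hfsqEL
  have hERn : ‖ER‖ ≤ ε := by
    rw [norm_eq_sqrt_fsq, ← hsqdq]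
    exact Real.sqrt_le_sqrt hfsqER
  have hEL10 : ‖EL‖ ≤ 1/10 := le_trans hELn hε10
  have hER10 : ‖ER‖ ≤ 1/10 := le_trans hERn hε10
  -- invertibility
  set uL : (Matrix (Fin q) (Fin q) ℝ)ˣ :=
    Units.oneSub (-EL) (by simpa using lt_of_le_of_lt hEL10 (by norm_num)) with huLdef
  set uR : (Matrix (Fin q) (Fin q) ℝ)ˣ :=
    Units.oneSub (-ER) (by simpa using lt_of_le_of_lt hER10 (by norm_num)) with huRdef
  have huL : (uL : Matrix (Fin q) (Fin q) ℝ) = 1 + EL := by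
    have h : (uL : Matrix (Fin q) (Fin q) ℝ) = 1 - -EL := rfl
    rw [h, sub_neg_eq_add]
  have huR : (uR : Matrix (Fin q) (Fin q) ℝ) = 1 + ER := by
    have h : (uR : Matrix (Fin q) (Fin q) ℝ) = 1 - -ER := rfl
    rw [h, sub_neg_eq_add]
  set L : Matrix (Fin q) (Fin q) ℝ := ((uL⁻¹ : (Matrix (Fin q) (Fin q) ℝ)ˣ) :
    Matrix (Fin q) (Fin q) ℝ) with hLdef
  set R : Matrix (Fin q) (Fin q) ℝ := ((uR⁻¹ : (Matrix (Fin q) (Fin q) ℝ)ˣ) :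
    Matrix (Fin q) (Fin q) ℝ) with hRdef
  have hL1 : (1 + EL) * L = 1 := by rw [← huL, hLdef]; exact uL.mul_inv
  have hL2 : L * (1 + EL) = 1 := by rw [← huL, hLdef]; exact uL.inv_mul
  have hR1 : (1 + ER) * R = 1 := by rw [← huR, hRdef]; exact uR.mul_inv
  have hR2 : R * (1 + ER) = 1 := by rw [← huR, hRdef]; exact uR.inv_mul
  -- norm bounds on L - 1, R - 1
  have hLid : L - 1 = -(EL * L) := by
    have h : L + EL * L = 1 := by rw [← hL1]; noncomm_ring
    calc L - 1 = L - (L + EL * L) := by rw [h]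
      _ = -(EL * L) := by abel
  have hRid : R - 1 = -(ER * R) := by
    have h : R + ER * R = 1 := by rw [← hR1]; noncomm_ring
    calc R - 1 = R - (R + ER * R) := by rw [h]
      _ = -(ER * R) := by abel
  have htL : ‖L - 1‖ ≤ (10/9) * ε := by
    have hstep : ‖L - 1‖ ≤ ‖EL‖ * ‖L - 1‖ + ‖EL‖ := by
      have h3 : EL * L = EL * (L - 1) + EL := by noncomm_ring
      calc ‖L - 1‖ = ‖EL * L‖ := by rw [hLid, norm_neg]
        _ = ‖EL * (L - 1) + EL‖ := by rw [h3]
        _ ≤ ‖EL * (L - 1)‖ + ‖EL‖ := norm_add_le _ _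
        _ ≤ ‖EL‖ * ‖L - 1‖ + ‖EL‖ := by
            gcongr
            exact norm_mul_le _ _
    have hp : ‖EL‖ * ‖L - 1‖ ≤ (1/10) * ‖L - 1‖ :=
      mul_le_mul_of_nonneg_right hEL10 (norm_nonneg _)
    linarith [hELn]
  have htR : ‖R - 1‖ ≤ (10/9) * ε := by
    have hstep : ‖R - 1‖ ≤ ‖ER‖ * ‖R - 1‖ + ‖ER‖ := by
      have h3 : ER * R = ER * (R - 1) + ER := by noncomm_ring
      calc ‖R - 1‖ = ‖ER * R‖ := by rw [hRid, norm_neg]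
        _ = ‖ER * (R - 1) + ER‖ := by rw [h3]
        _ ≤ ‖ER * (R - 1)‖ + ‖ER‖ := norm_add_le _ _
        _ ≤ ‖ER‖ * ‖R - 1‖ + ‖ER‖ := by
            gcongr
            exact norm_mul_le _ _
    have hp : ‖ER‖ * ‖R - 1‖ ≤ (1/10) * ‖R - 1‖ :=
      mul_le_mul_of_nonneg_right hER10 (norm_nonneg _)
    linarith [hERn]
  have hELL : ‖EL * L‖ ≤ (10/9) * ε := by
    rw [show EL * L = -(L - 1) by rw [hLid, neg_neg], norm_neg]
    exact htL
  have hERR : ‖ER * R‖ ≤ (10/9) * ε := by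
    rw [show ER * R = -(R - 1) by rw [hRid, neg_neg], norm_neg]
    exact htR
  -- the maps
  set Winv : Matrix (Fin q) (Fin q) ℝ →ₗ[ℝ] Matrix (Fin q) (Fin q) ℝ :=
    { toFun := fun Y => L * Y * Rᵀ
      map_add' := by intro x y; noncomm_ring
      map_smul' := by
        intro c x
        simp [Matrix.mul_smul, Matrix.smul_mul] } with hWinvdef
  set M : Matrix (Fin q) (Fin q) ℝ →ₗ[ℝ] Matrix (Fin q) (Fin q) ℝ :=
    (LinearMap.id + D).comp Winv - LinearMap.id - Pperp with hMdef
  have hWinvapp : ∀ Y, Winv Y = L * Y * Rᵀ := fun Y => rfl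
  have hMapp : ∀ Y, M Y = L * Y * Rᵀ + D (L * Y * Rᵀ) - Y - Pperp Y := by
    intro Y
    rw [hMdef]
    simp only [LinearMap.sub_apply, LinearMap.add_apply, LinearMap.comp_apply,
      LinearMap.id_apply, hWinvapp]
    try abel
  refine ⟨M, EL, ER, ?_, ?_, ?_⟩
  · -- the norm bound on M
    have hMfun : ∀ Y, M Y = Pperp (L * Y * Rᵀ - Y) - (EL * L) * Y * (ER * R)ᵀ := by
      intro Y
      rw [hMapp Y]
      set Z : Matrix (Fin q) (Fin q) ℝ := L * Y * Rᵀ with hZdef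
      have hZY : (1 + EL) * Z * (1 + ER)ᵀ = Y := by
        calc (1 + EL) * Z * (1 + ER)ᵀ
            = ((1 + EL) * L) * Y * (Rᵀ * (1 + ER)ᵀ) := by rw [hZdef]; noncomm_ring
          _ = Y := by
              rw [hL1, ← Matrix.transpose_mul, hR1]
              simp
      have hkey : Y = Z + EL * Z + Z * ERᵀ + EL * Z * ERᵀ := by
        conv_lhs => rw [← hZY]
        rw [Matrix.transpose_add, Matrix.transpose_one]
        noncomm_ring
      have hE2 : (EL * L) * Y * (ER * R)ᵀ = EL * Z * ERᵀ := by
        rw [Matrix.transpose_mul, hZdef]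
        noncomm_ring
      rw [hPW Z, map_sub, hE2]
      rw [hkey]
      abel
    have hMeq : ⇑M = fun Y => Pperp (L * Y * Rᵀ - Y) - (EL * L) * Y * (ER * R)ᵀ :=
      funext hMfun
    rw [show hsNorm q (⇑M)
        = hsNorm q (fun Y => Pperp (L * Y * Rᵀ - Y) - (EL * L) * Y * (ER * R)ᵀ) by
      rw [hMeq]]
    have tri := hsNorm_sub_le (q := q) (fun Y => Pperp (L * Y * Rᵀ - Y))
      (fun Y => (EL * L) * Y * (ER * R)ᵀ)
    have ht : hsNorm q (fun Y => (EL * L) * Y * (ER * R)ᵀ) = ‖EL * L‖ * ‖ER * R‖ :=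
      hsNorm_tensor _ _
    set cc : ℝ := ‖L - 1‖ * ‖R - 1‖ + ‖L - 1‖ + ‖R - 1‖ with hcc
    have hcc0 : (0:ℝ) ≤ cc := by positivity
    have hcomp : hsNorm q (fun Y => Pperp (L * Y * Rᵀ - Y)) ≤ cc * d := by
      unfold hsNorm
      rw [hsInner_comp_self]
      have hterm : ∀ c e : Fin q,
          fsq (Lᵀ * (Matrix.of fun i j => Pperp (Matrix.single i j 1) c e) * R
            - (Matrix.of fun i j => Pperp (Matrix.single i j 1) c e))
          ≤ cc^2 * fsq (Matrix.of fun i j => Pperp (Matrix.single i j 1) c e) := by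
        intro c e
        set G : Matrix (Fin q) (Fin q) ℝ :=
          Matrix.of fun i j => Pperp (Matrix.single i j 1) c e with hG
        rw [fsq_eq_sq_norm, fsq_eq_sq_norm]
        have hid : Lᵀ * G * R - G = (Lᵀ - 1) * G * (R - 1) + (Lᵀ - 1) * G + G * (R - 1) := by
          noncomm_ring
        have hLT : ‖Lᵀ - (1 : Matrix (Fin q) (Fin q) ℝ)‖ = ‖L - 1‖ := by
          rw [show Lᵀ - (1 : Matrix (Fin q) (Fin q) ℝ) = (L - 1)ᵀ by
            rw [Matrix.transpose_sub, Matrix.transpose_one], Matrix.frobenius_norm_transpose]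
        have hb : ‖Lᵀ * G * R - G‖ ≤ cc * ‖G‖ := by
          rw [hid]
          have h1 : ‖(Lᵀ - 1) * G * (R - 1)‖ ≤ ‖L - 1‖ * ‖G‖ * ‖R - 1‖ := by
            calc ‖(Lᵀ - 1) * G * (R - 1)‖ ≤ ‖(Lᵀ - 1) * G‖ * ‖R - 1‖ := norm_mul_le _ _
              _ ≤ ‖Lᵀ - 1‖ * ‖G‖ * ‖R - 1‖ := by
                  gcongr
                  exact norm_mul_le _ _
              _ = ‖L - 1‖ * ‖G‖ * ‖R - 1‖ := by rw [hLT]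
          have h2 : ‖(Lᵀ - 1) * G‖ ≤ ‖L - 1‖ * ‖G‖ := by
            rw [← hLT]; exact norm_mul_le _ _
          have h3 : ‖G * (R - 1)‖ ≤ ‖G‖ * ‖R - 1‖ := norm_mul_le _ _
          calc ‖(Lᵀ - 1) * G * (R - 1) + (Lᵀ - 1) * G + G * (R - 1)‖
              ≤ ‖(Lᵀ - 1) * G * (R - 1)‖ + ‖(Lᵀ - 1) * G‖ + ‖G * (R - 1)‖ :=
                norm_add₃_le
            _ ≤ ‖L - 1‖ * ‖G‖ * ‖R - 1‖ + ‖L - 1‖ * ‖G‖ + ‖G‖ * ‖R - 1‖ := by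
                gcongr
            _ = cc * ‖G‖ := by rw [hcc]; ring
        have := pow_le_pow_left₀ (norm_nonneg _) hb 2
        calc ‖Lᵀ * G * R - G‖^2 ≤ (cc * ‖G‖)^2 := this
          _ = cc^2 * ‖G‖^2 := by ring
      calc Real.sqrt (∑ c : Fin q, ∑ e : Fin q,
              fsq (Lᵀ * (Matrix.of fun i j => Pperp (Matrix.single i j 1) c e) * R
                - (Matrix.of fun i j => Pperp (Matrix.single i j 1) c e)))
          ≤ Real.sqrt (∑ c : Fin q, ∑ e : Fin q,
              cc^2 * fsq (Matrix.of fun i j => Pperp (Matrix.single i j 1) c e)) := by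
            apply Real.sqrt_le_sqrt
            apply Finset.sum_le_sum
            intro c _
            apply Finset.sum_le_sum
            intro e _
            exact hterm c e
        _ = Real.sqrt (cc^2 * hsInner q (⇑Pperp) (⇑Pperp)) := by
            rw [← sum_fsq_G Pperp]
            congr 1
            rw [Finset.mul_sum]
            congr 1; ext c
            rw [Finset.mul_sum]
        _ = cc * Real.sqrt (hsInner q (⇑Pperp) (⇑Pperp)) := by
            rw [Real.sqrt_mul (sq_nonneg cc), Real.sqrt_sq hcc0]
        _ ≤ cc * d := by
            apply mul_le_mul_of_nonneg_left _ hcc0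
            calc Real.sqrt (hsInner q (⇑Pperp) (⇑Pperp)) ≤ Real.sqrt (d^2) :=
                Real.sqrt_le_sqrt hPP
              _ = d := Real.sqrt_sq hd0
    have hfinal : hsNorm q (fun Y => Pperp (L * Y * Rᵀ - Y) - (EL * L) * Y * (ER * R)ᵀ)
        ≤ cc * d + ‖EL * L‖ * ‖ER * R‖ := by
      calc hsNorm q (fun Y => Pperp (L * Y * Rᵀ - Y) - (EL * L) * Y * (ER * R)ᵀ)
          ≤ hsNorm q (fun Y => Pperp (L * Y * Rᵀ - Y))
            + hsNorm q (fun Y => (EL * L) * Y * (ER * R)ᵀ) := tri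
        _ ≤ cc * d + ‖EL * L‖ * ‖ER * R‖ := by rw [ht]; gcongr
    have h5 : (5:ℝ) * d^2 / Real.sqrt q = 5 * ε * d := by
      rw [hεdef]; ring
    rw [h5]
    have hccb : cc ≤ (190/81) * ε := by
      have hprod : ‖L - 1‖ * ‖R - 1‖ ≤ ((10/9) * ε) * ((10/9) * ε) :=
        mul_le_mul htL htR (norm_nonneg _) (by positivity)
      have hee : ε * ε ≤ (1/10) * ε := by nlinarith
      rw [hcc]
      nlinarith
    have htens : ‖EL * L‖ * ‖ER * R‖ ≤ (100/81) * (ε * ε) :=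
      by nlinarith [mul_le_mul hELL hERR (norm_nonneg _) (by positivity : (0:ℝ) ≤ (10/9) * ε)]
    have hεε : ε * ε ≤ ε * d := by nlinarith
    calc hsNorm q (fun Y => Pperp (L * Y * Rᵀ - Y) - (EL * L) * Y * (ER * R)ᵀ)
        ≤ cc * d + ‖EL * L‖ * ‖ER * R‖ := hfinal
      _ ≤ (190/81) * ε * d + (100/81) * (ε * d) := by
          have := mul_le_mul_of_nonneg_right hccb hd0
          nlinarith
      _ ≤ 5 * ε * d := by nlinarith [mul_nonneg hε0 hd0]
  · -- the operator bound on 𝒲 - I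
    intro X
    have hY : (1 + EL) * X * (1 + ER)ᵀ - X = EL * X + X * ERᵀ + EL * (X * ERᵀ) := by
      rw [Matrix.transpose_add, Matrix.transpose_one]
      noncomm_ring
    rw [sqrt_trace_eq_norm, sqrt_trace_eq_norm, hY]
    have h1 : ‖EL * X‖ ≤ ε * ‖X‖ :=
      le_trans (norm_mul_le _ _) (mul_le_mul_of_nonneg_right hELn (norm_nonneg _))
    have h2 : ‖X * ERᵀ‖ ≤ ‖X‖ * ε := by
      calc ‖X * ERᵀ‖ ≤ ‖X‖ * ‖ERᵀ‖ := norm_mul_le _ _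
        _ = ‖X‖ * ‖ER‖ := by rw [Matrix.frobenius_norm_transpose]
        _ ≤ ‖X‖ * ε := mul_le_mul_of_nonneg_left hERn (norm_nonneg _)
    have h3 : ‖EL * (X * ERᵀ)‖ ≤ ε * (‖X‖ * (1/10)) := by
      calc ‖EL * (X * ERᵀ)‖ ≤ ‖EL‖ * ‖X * ERᵀ‖ := norm_mul_le _ _
        _ ≤ ε * (‖X‖ * (1/10)) := by
            apply mul_le_mul hELn _ (norm_nonneg _) hε0
            calc ‖X * ERᵀ‖ ≤ ‖X‖ * ‖ERᵀ‖ := norm_mul_le _ _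
              _ = ‖X‖ * ‖ER‖ := by rw [Matrix.frobenius_norm_transpose]
              _ ≤ ‖X‖ * (1/10) := mul_le_mul_of_nonneg_left hER10 (norm_nonneg _)
    have htot : ‖EL * X + X * ERᵀ + EL * (X * ERᵀ)‖
        ≤ ε * ‖X‖ + ‖X‖ * ε + ε * (‖X‖ * (1/10)) := by
      calc ‖EL * X + X * ERᵀ + EL * (X * ERᵀ)‖
          ≤ ‖EL * X‖ + ‖X * ERᵀ‖ + ‖EL * (X * ERᵀ)‖ := norm_add₃_le
        _ ≤ ε * ‖X‖ + ‖X‖ * ε + ε * (‖X‖ * (1/10)) := by gcongr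
    have h3ε : (3:ℝ) * d / Real.sqrt q * ‖X‖ = 3 * ε * ‖X‖ := by rw [hεdef]; ring
    rw [h3ε]
    nlinarith [mul_nonneg hε0 (norm_nonneg X)]
  · -- the factorization identity
    intro X
    have hXinv : L * ((1 + EL) * X * (1 + ER)ᵀ) * Rᵀ = X := by
      calc L * ((1 + EL) * X * (1 + ER)ᵀ) * Rᵀ
          = (L * (1 + EL)) * X * ((1 + ER)ᵀ * Rᵀ) := by noncomm_ring
        _ = X := by
            rw [hL2, ← Matrix.transpose_mul, hR2]
            simp
    rw [hMapp, hXinv]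
    abel
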